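/- arXiv:2005.04422 — 2 statements merged into one kernel-verified Lean document; each statement's English description precedes it below -/
import Mathlib

section
/- Every complex polynomial p of degree ≤ M in the three real variables x, y, z can be written as p = h + q·(x²+y²+z²−1), where h is a finite linear combination of homogeneous harmonic polynomials of degrees ≤ M and q is a polynomial of degree ≤ M−2. -/
open scoped ComplexConjugate
open MeasureTheory Filter Topology

noncomputable section

/-! ## Setting

`M₂(ℂ)^{⊗N}` is realized as matrices indexed by `Fin N → Fin 2`, acting on
`(ℂ²)^{⊗N} = EuclideanSpace ℂ (Fin N → Fin 2)`. -/

/-- `M₂(ℂ)^{⊗N}`, realized as matrices indexed by `Fin N → Fin 2`. -/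
abbrev TP (N : ℕ) : Type := Matrix (Fin N → Fin 2) (Fin N → Fin 2) ℂ

/-- The Pauli matrices `σ₁, σ₂, σ₃`. -/
def pauli : Fin 3 → Matrix (Fin 2) (Fin 2) ℂ
  | 0 => !![0, 1; 1, 0]
  | 1 => !![0, -Complex.I; Complex.I, 0]
  | 2 => !![1, 0; 0, -1]

/-- The symmetrization operator `S_N` on `M₂(ℂ)^{⊗N}`: the average over all permutations
of the tensor factors. -/
def symmMat (N : ℕ) (A : TP N) : TP N :=
  (N.factorial : ℂ)⁻¹ • ∑ σ : Equiv.Perm (Fin N), Matrix.of fun i j => A (i ∘ σ) (j ∘ σ)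

/-- `b ⊗ I₂^{⊗(N−M)}` (junk value `0` if `M > N`). -/
def embedMat (M N : ℕ) (b : TP M) : TP N :=
  if h : M ≤ N then
    Matrix.of fun i j =>
      b (fun k => i (Fin.castLE h k)) (fun k => j (Fin.castLE h k)) *
        ∏ k ∈ Finset.univ.filter (fun k : Fin N => M ≤ (k : ℕ)),
          (if i k = j k then (1 : ℂ) else 0)
  else 0

/-- `S_{M,N}(b) = S_N(b ⊗ I₂^{⊗(N−M)})`. -/
def SMN (M N : ℕ) (b : TP M) : TP N := symmMat N (embedMat M N b)

/-- The elementary tensor `σ_{m 0} ⊗ ⋯ ⊗ σ_{m (L-1)}` as a matrix on `(ℂ²)^{⊗L}`. -/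
def pauliTensor {L : ℕ} (m : Fin L → Fin 3) : TP L :=
  Matrix.of fun i j => ∏ k, pauli (m k) (i k) (j k)

/-- For a monomial with exponents `d`, the list of its variable indices (first `d 0` copies
of `0`, then `d 1` copies of `1`, then `d 2` copies of `2`). -/
def monFun (d : Fin 3 →₀ ℕ) : Fin (d 0 + d 1 + d 2) → Fin 3 := fun k =>
  if (k : ℕ) < d 0 then 0 else if (k : ℕ) < d 0 + d 1 then 1 else 2

/-- Quantization of the monomial `x^{d 0} y^{d 1} z^{d 2}`:
`S_{L,N}(σ_{j₁} ⊗ ⋯ ⊗ σ_{j_L})` if `L ≤ N`, and `0` if `L > N`. -/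
def Qmon (N : ℕ) (d : Fin 3 →₀ ℕ) : TP N :=
  SMN (d 0 + d 1 + d 2) N (pauliTensor (monFun d))

/-- The quantization map `Q_{1/N}`: the linear extension of `Qmon` to all complex
polynomials in the three real variables `x, y, z`. -/
def Q (N : ℕ) (p : MvPolynomial (Fin 3) ℂ) : TP N :=
  ∑ d ∈ p.support, p.coeff d • Qmon N d

/-- The symmetric subspace `Sym^N(ℂ²) ⊆ (ℂ²)^{⊗N}` (the fixed points of the permutation
action, i.e. the range of the vector symmetrizer). -/
def SymSub (N : ℕ) : Submodule ℂ (EuclideanSpace ℂ (Fin N → Fin 2)) where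
  carrier := {v | ∀ σ : Equiv.Perm (Fin N), ∀ i, v (i ∘ σ) = v i}
  add_mem' := by
    intro a b ha hb σ i
    have : (a + b) (i ∘ σ) = a (i ∘ σ) + b (i ∘ σ) := rfl
    rw [this, ha σ i, hb σ i]; rfl
  zero_mem' := by intro σ i; rfl
  smul_mem' := by
    intro c v hv σ i
    have : (c • v) (i ∘ σ) = c • (v (i ∘ σ)) := rfl
    rw [this, hv σ i]; rfl

/-- The vector symmetrizer. -/
def symVec (N : ℕ) (v : EuclideanSpace ℂ (Fin N → Fin 2)) :
    EuclideanSpace ℂ (Fin N → Fin 2) :=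
  WithLp.toLp 2 (fun i => (N.factorial : ℂ)⁻¹ * ∑ σ : Equiv.Perm (Fin N), v (i ∘ σ))

lemma symVec_mem (N : ℕ) (v : EuclideanSpace ℂ (Fin N → Fin 2)) :
    symVec N v ∈ SymSub N := by
  intro τ i
  show (N.factorial : ℂ)⁻¹ * ∑ σ : Equiv.Perm (Fin N), v ((i ∘ τ) ∘ σ)
      = (N.factorial : ℂ)⁻¹ * ∑ σ : Equiv.Perm (Fin N), v (i ∘ σ)
  congr 1
  exact Fintype.sum_equiv (Equiv.mulLeft τ) _ _ (fun σ => by rfl)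

/-- The vector symmetrizer as a linear map onto the symmetric subspace. -/
def symProj (N : ℕ) : EuclideanSpace ℂ (Fin N → Fin 2) →ₗ[ℂ] SymSub N where
  toFun v := ⟨symVec N v, symVec_mem N v⟩
  map_add' v w := by
    apply Subtype.ext
    refine PiLp.ext fun i => ?_
    show (N.factorial : ℂ)⁻¹ * ∑ σ : Equiv.Perm (Fin N), (v + w) (i ∘ σ) = _
    have h : ∀ σ : Equiv.Perm (Fin N), (v + w) (i ∘ σ) = v (i ∘ σ) + w (i ∘ σ) :=
      fun _ => rfl
    simp only [h, Finset.sum_add_distrib]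
    show _ = (N.factorial : ℂ)⁻¹ * (∑ σ : Equiv.Perm (Fin N), v (i ∘ σ))
        + (N.factorial : ℂ)⁻¹ * (∑ σ : Equiv.Perm (Fin N), w (i ∘ σ))
    ring
  map_smul' c v := by
    apply Subtype.ext
    refine PiLp.ext fun i => ?_
    show (N.factorial : ℂ)⁻¹ * ∑ σ : Equiv.Perm (Fin N), (c • v) (i ∘ σ) = _
    have h : ∀ σ : Equiv.Perm (Fin N), (c • v) (i ∘ σ) = c * v (i ∘ σ) := fun _ => rfl
    simp only [h, ← Finset.mul_sum]
    show _ = c * ((N.factorial : ℂ)⁻¹ * (∑ σ : Equiv.Perm (Fin N), v (i ∘ σ)))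
    ring

/-- The restriction (compression) of a matrix `A` on `(ℂ²)^{⊗N}` to the symmetric subspace
`Sym^N(ℂ²)`, as a continuous linear operator; when `A` leaves `Sym^N(ℂ²)` invariant (as do
all operators considered here) this is exactly the restriction `A|_{Sym^N(ℂ²)}`. -/
def restrSym (N : ℕ) (A : TP N) : SymSub N →L[ℂ] SymSub N :=
  LinearMap.toContinuousLinearMap
    ((symProj N) ∘ₗ (Matrix.toEuclideanLin A) ∘ₗ (SymSub N).subtype)

/-- The unit sphere `S² ⊂ ℝ³`. -/
abbrev S2 : Type := Metric.sphere (0 : EuclideanSpace ℝ (Fin 3)) 1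

/-- Spherical coordinates `(θ, φ) ↦ (sin θ cos φ, sin θ sin φ, cos θ)`. -/
def sphCoord (a : ℝ × ℝ) : EuclideanSpace ℝ (Fin 3) :=
  WithLp.toLp 2 ![Real.sin a.1 * Real.cos a.2, Real.sin a.1 * Real.sin a.2, Real.cos a.1]

lemma sphCoord_mem (a : ℝ × ℝ) :
    sphCoord a ∈ Metric.sphere (0 : EuclideanSpace ℝ (Fin 3)) 1 := by
  have h : ‖sphCoord a‖ = 1 := by
    rw [EuclideanSpace.norm_eq]
    have : ∑ i : Fin 3, sphCoord a i ^ 2 = 1 := by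
      have hs := Real.sin_sq_add_cos_sq a.1
      have hc := Real.sin_sq_add_cos_sq a.2
      simp [sphCoord, Fin.sum_univ_three]
      nlinarith [hs, hc]
    have h2 : ∀ i : Fin 3, ‖sphCoord a i‖ ^ 2 = sphCoord a i ^ 2 := fun i => sq_abs _
    simp only [h2, this]
    exact Real.sqrt_one
  simpa [mem_sphere_iff_norm] using h

/-- The standard surface measure `dΩ` on `S²` (of total mass `4π`), realized as the
push-forward of `sin θ dθ dφ` on `[0,π] × (−π,π]` under spherical coordinates. -/
def μS2 : Measure S2 :=
  Measure.map (fun a : ℝ × ℝ => (⟨sphCoord a, sphCoord_mem a⟩ : S2))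
    (((volume : Measure (ℝ × ℝ)).restrict
        (Set.Icc (0 : ℝ) Real.pi ×ˢ Set.Ioc (-Real.pi) Real.pi)).withDensity
      fun a => ENNReal.ofReal (Real.sin a.1))

/-- The polar angle `θ ∈ [0, π]` of a point of `S²`. -/
def thetaOf (Ω : S2) : ℝ := Real.arccos ((Ω : EuclideanSpace ℝ (Fin 3)) 2)

/-- The azimuthal angle `φ ∈ (−π, π]` of a point of `S²`. -/
def phiOf (Ω : S2) : ℝ :=
  Complex.arg (((Ω : EuclideanSpace ℝ (Fin 3)) 0 : ℂ) +
    ((Ω : EuclideanSpace ℝ (Fin 3)) 1 : ℂ) * Complex.I)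

/-- The coherent spin state `|Ω⟩₁ = cos(θ/2) e₁ + e^{iφ} sin(θ/2) e₂ ∈ ℂ²`. -/
def cs1 (Ω : S2) : Fin 2 → ℂ :=
  ![(Real.cos (thetaOf Ω / 2) : ℂ),
    Complex.exp (Complex.I * (phiOf Ω : ℂ)) * (Real.sin (thetaOf Ω / 2) : ℂ)]

/-- The `N`-fold coherent spin state `|Ω⟩_N = |Ω⟩₁^{⊗N} ∈ (ℂ²)^{⊗N}`. -/
def csN (N : ℕ) (Ω : S2) : EuclideanSpace ℂ (Fin N → Fin 2) :=
  WithLp.toLp 2 (fun i => ∏ k, cs1 Ω (i k))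

/-- The matrix of the weak integral `((N+1)/(4π)) ∫_{S²} f(Ω) |Ω⟩⟨Ω|_N dΩ` on `(ℂ²)^{⊗N}`
(entrywise Bochner integral, which in finite dimension coincides with the weak integral). -/
def Q'mat (N : ℕ) (f : S2 → ℂ) : TP N :=
  Matrix.of fun i j =>
    ((N + 1 : ℂ) / (4 * (Real.pi : ℂ))) * ∫ Ω, f Ω * csN N Ω i * conj (csN N Ω j) ∂μS2

/-- The coherent-state (Berezin) quantization map `Q'_{1/N}`, as an operator on
`Sym^N(ℂ²)` (the range of `|Ω⟩⟨Ω|_N` lies in `Sym^N(ℂ²)`, so the compression coincides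
with the operator defined by the weak integral). -/
def Q' (N : ℕ) (f : S2 → ℂ) : SymSub N →L[ℂ] SymSub N := restrSym N (Q'mat N f)

/-- The restriction of a polynomial (in three real variables) to the unit sphere `S²`. -/
def restrictS2 (p : MvPolynomial (Fin 3) ℂ) : S2 → ℂ :=
  fun Ω => MvPolynomial.eval (fun i => ((Ω : EuclideanSpace ℝ (Fin 3)) i : ℂ)) p

/-- The restriction to `S²` as a linear map. -/
def restrictS2Lin : MvPolynomial (Fin 3) ℂ →ₗ[ℂ] (S2 → ℂ) where
  toFun := restrictS2
  map_add' p q := by funext Ω; simp [restrictS2]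
  map_smul' c p := by funext Ω; simp [restrictS2]

/-- `P_N(S²)`: the space of restrictions to `S²` of complex polynomials of degree `≤ N`
in three real variables. -/
def PNS2 (N : ℕ) : Submodule ℂ (S2 → ℂ) where
  carrier := {g | ∃ p : MvPolynomial (Fin 3) ℂ, p.totalDegree ≤ N ∧ g = restrictS2 p}
  add_mem' := by
    rintro a b ⟨p, hp, rfl⟩ ⟨q, hq, rfl⟩
    exact ⟨p + q, le_trans (MvPolynomial.totalDegree_add p q) (by omega),
      by funext Ω; simp [restrictS2]⟩
  zero_mem' := ⟨0, by simp, by funext Ω; simp [restrictS2]⟩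
  smul_mem' := by
    rintro c a ⟨p, hp, rfl⟩
    exact ⟨c • p, le_trans (MvPolynomial.totalDegree_smul_le c p) hp,
      by funext Ω; simp [restrictS2]⟩

/-- The `N`-fold tensor power `U^{⊗N}` of a `2×2` matrix, on `(ℂ²)^{⊗N}`. -/
def tpow (N : ℕ) (U : Matrix (Fin 2) (Fin 2) ℂ) : TP N :=
  Matrix.of fun i j => ∏ k, U (i k) (j k)

/-- `σ_k(j) = I₂ ⊗ ⋯ ⊗ σ_k ⊗ ⋯ ⊗ I₂` with the Pauli matrix `σ_k` in the `j`-th slot. -/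
def pauliAt (N : ℕ) (k : Fin 3) (j : Fin N) : TP N :=
  Matrix.of fun a b =>
    pauli k (a j) (b j) *
      ∏ t ∈ Finset.univ.filter (fun t : Fin N => t ≠ j), (if a t = b t then (1 : ℂ) else 0)

/-- The quantum Curie–Weiss Hamiltonian
`h^{CW}_{1/N} = (1/N)( −(J/(2N)) Σ_{i,j} σ₃(i)σ₃(j) − B Σ_j σ₁(j))`. -/
def hCW (J B : ℝ) (N : ℕ) : TP N :=
  ((N : ℂ))⁻¹ • ((-(J / (2 * N)) : ℂ) • ∑ i : Fin N, ∑ j : Fin N,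
      pauliAt N 2 i * pauliAt N 2 j
    + (-(B : ℂ)) • ∑ j : Fin N, pauliAt N 0 j)

open scoped Classical in
/-- The action of a (special orthogonal) matrix on the unit sphere `S²`
(junk value if the image does not lie on the sphere). -/
def rotAct (R : Matrix (Fin 3) (Fin 3) ℝ) (Ω : S2) : S2 :=
  if h : (WithLp.toLp 2 (R.mulVec (Ω : EuclideanSpace ℝ (Fin 3))) : EuclideanSpace ℝ (Fin 3)) ∈
      Metric.sphere (0 : EuclideanSpace ℝ (Fin 3)) 1
  then ⟨WithLp.toLp 2 (R.mulVec (Ω : EuclideanSpace ℝ (Fin 3))), h⟩ else Ω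

/-- A polynomial in three variables is harmonic if its Laplacian vanishes. -/
def IsHarmonic (p : MvPolynomial (Fin 3) ℂ) : Prop :=
  ∑ i : Fin 3, MvPolynomial.pderiv i (MvPolynomial.pderiv i p) = 0

/-- The polynomial `x² + y² + z² − 1`. -/
def sphPoly : MvPolynomial (Fin 3) ℂ :=
  MvPolynomial.X 0 ^ 2 + MvPolynomial.X 1 ^ 2 + MvPolynomial.X 2 ^ 2 - 1

/-- The Dicke state `|k, N−k⟩ ∈ Sym^N(ℂ²)`: `binom(N,k)^{-1/2}` times the sum of all
elementary tensors with exactly `k` factors `e₂` (and `N−k` factors `e₁`). -/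
def dicke (N k : ℕ) : EuclideanSpace ℂ (Fin N → Fin 2) :=
  WithLp.toLp 2 (fun i => if (Finset.univ.filter fun t => i t = 1).card = k
    then ((Real.sqrt (N.choose k) : ℂ))⁻¹ else 0)

/-- The operator norm of a matrix acting on `(ℂ²)^{⊗N}` with its Euclidean (ℓ²) norm. -/
def matOpNorm {N : ℕ} (A : TP N) : ℝ :=
  ‖LinearMap.toContinuousLinearMap (Matrix.toEuclideanLin A)‖

namespace PolyDecompAux

open MvPolynomial

abbrev P3 := MvPolynomial (Fin 3) ℂ

/-- The Laplacian as a linear map. -/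
def lapL : P3 →ₗ[ℂ] P3 :=
  ((pderiv (R := ℂ) (0 : Fin 3)).toLinearMap ∘ₗ (pderiv (R := ℂ) (0 : Fin 3)).toLinearMap)
    + ((pderiv (R := ℂ) (1 : Fin 3)).toLinearMap ∘ₗ (pderiv (R := ℂ) (1 : Fin 3)).toLinearMap)
    + ((pderiv (R := ℂ) (2 : Fin 3)).toLinearMap ∘ₗ (pderiv (R := ℂ) (2 : Fin 3)).toLinearMap)

lemma lapL_apply (p : P3) : lapL p = ∑ i : Fin 3, pderiv i (pderiv i p) := by
  simp [lapL, Fin.sum_univ_three]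

lemma isHarmonic_iff (p : P3) : IsHarmonic p ↔ lapL p = 0 := by
  rw [lapL_apply]; exact Iff.rfl

/-- r² = x²+y²+z². -/
def r2 : P3 := X 0 ^ 2 + X 1 ^ 2 + X 2 ^ 2

lemma sphPoly_eq : sphPoly = r2 - 1 := rfl

lemma isHomogeneous_r2 : r2.IsHomogeneous 2 := by
  have h : ∀ i : Fin 3, (X i ^ 2 : P3).IsHomogeneous 2 := by
    intro i
    have := (isHomogeneous_X ℂ i).mul (isHomogeneous_X ℂ i)
    rwa [← sq] at this
  exact ((h 0).add (h 1)).add (h 2)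

lemma degree_eq_sum (d : Fin 3 →₀ ℕ) : d.degree = d 0 + d 1 + d 2 := by
  rw [Finsupp.degree_apply, Finset.sum_subset (Finset.subset_univ d.support)
    (fun i _ hi => Finsupp.notMem_support_iff.mp hi)]
  exact Fin.sum_univ_three _

lemma degree_add (a b : Fin 3 →₀ ℕ) : (a + b).degree = a.degree + b.degree := by
  simp only [degree_eq_sum, Finsupp.add_apply]
  ring

lemma degree_single (i : Fin 3) : (Finsupp.single i 1 : Fin 3 →₀ ℕ).degree = 1 := by
  rw [Finsupp.degree_apply, Finsupp.support_single_ne_zero _ one_ne_zero, Finset.sum_singleton,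
    Finsupp.single_eq_same]

lemma degree_of_mem_support {p : P3} {n : ℕ} (hp : p.IsHomogeneous n)
    {d : Fin 3 →₀ ℕ} (hd : d ∈ p.support) : d.degree = n := by
  have := hp (mem_support_iff.mp hd)
  rw [Finsupp.degree_eq_weight_one]; exact this

lemma sub_add_single {d : Fin 3 →₀ ℕ} {i : Fin 3} (h : d i ≠ 0) :
    Finsupp.single i 1 + (d - Finsupp.single i 1) = d := by
  ext j
  rw [Finsupp.add_apply, Finsupp.tsub_apply]
  by_cases hj : i = j
  · subst hj; rw [Finsupp.single_eq_same]; omega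
  · rw [Finsupp.single_eq_of_ne' hj]; omega

lemma pderiv_isHomogeneous {p : P3} {n : ℕ} (hp : p.IsHomogeneous n) (i : Fin 3) :
    (pderiv i p).IsHomogeneous (n - 1) := by
  conv_lhs => rw [p.as_sum]
  rw [map_sum]
  apply IsHomogeneous.sum
  intro d hd
  rw [pderiv_monomial]
  by_cases h : d i = 0
  · simp [h, isHomogeneous_zero]
  · apply isHomogeneous_monomial
    have hdeg : d.degree = n := degree_of_mem_support hp hd
    have h1 := congrArg Finsupp.degree (sub_add_single h)
    rw [degree_add, degree_single] at h1
    omega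

lemma pderiv_eq_zero_of_isHomogeneous_zero {p : P3} (hp : p.IsHomogeneous 0) (i : Fin 3) :
    pderiv i p = 0 := by
  conv_lhs => rw [p.as_sum]
  rw [map_sum]
  apply Finset.sum_eq_zero
  intro d hd
  have hdeg : d.degree = 0 := degree_of_mem_support hp hd
  have : d = 0 := by rwa [Finsupp.degree_eq_zero_iff] at hdeg
  subst this
  simp [pderiv_monomial]

lemma euler {p : P3} {n : ℕ} (hp : p.IsHomogeneous n) :
    ∑ i : Fin 3, X i * pderiv i p = C (n : ℂ) * p := by
  have hsplit : ∀ i : Fin 3, X i * pderiv i p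
      = ∑ d ∈ p.support, X (R := ℂ) i * pderiv i (monomial d (coeff d p)) := by
    intro i
    conv_lhs => rw [p.as_sum]
    rw [map_sum, Finset.mul_sum]
  simp only [hsplit]
  rw [Finset.sum_comm]
  conv_rhs => rw [p.as_sum, Finset.mul_sum]
  apply Finset.sum_congr rfl
  intro d hd
  have hdeg : d.degree = n := degree_of_mem_support hp hd
  have hterm : ∀ i : Fin 3, X i * pderiv i (monomial d (coeff d p))
      = monomial d (coeff d p * d i) := by
    intro i
    rw [pderiv_monomial]
    by_cases h : d i = 0
    · simp [h]
    · rw [X, monomial_mul, one_mul, sub_add_single h]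
  simp only [hterm]
  have harg : (∑ i : Fin 3, coeff d p * ((d i : ℕ) : ℂ)) = (n : ℂ) * coeff d p := by
    rw [Fin.sum_univ_three, degree_eq_sum] at *
    push_cast [← hdeg]
    ring
  rw [C_mul_monomial, ← map_sum (monomial d), harg]

lemma pdX : ∀ i j : Fin 3, pderiv i (X j : P3) = if j = i then 1 else 0 := by
  intro i j
  by_cases h : j = i
  · subst h; rw [pderiv_X_self, if_pos rfl]
  · rw [pderiv_X_of_ne h, if_neg h]

lemma pd_sq (j i : Fin 3) : pderiv i ((X j : P3) ^ 2) = if j = i then 2 * X j else 0 := by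
  rw [pow_two, pderiv_mul, pdX]
  by_cases h : j = i
  · rw [if_pos h, if_pos h]
    ring
  · rw [if_neg h, if_neg h]
    ring

lemma lap_r2_mul (q : P3) :
    lapL (r2 * q) = 6 * q + 4 * (∑ i : Fin 3, X i * pderiv i q) + r2 * lapL q := by
  have dr2 : ∀ i : Fin 3, pderiv i r2 = 2 * X i := by
    intro i
    have hr : r2 = ∑ j : Fin 3, (X j : P3) ^ 2 := by rw [Fin.sum_univ_three]; rfl
    rw [hr, map_sum]
    simp only [pd_sq]
    rw [Finset.sum_ite_eq' Finset.univ i (fun j => 2 * X (R := ℂ) j)]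
    simp
  have hstep1 : ∀ i : Fin 3, pderiv i (r2 * q) = C 2 * (X i * q) + r2 * pderiv i q := by
    intro i
    rw [pderiv_mul, dr2, (map_ofNat (C : ℂ →+* P3) 2).symm]
    ring
  have hstep2 : ∀ i : Fin 3, pderiv i (pderiv i (r2 * q))
      = 2 * q + 4 * (X i * pderiv i q) + r2 * pderiv i (pderiv i q) := by
    intro i
    rw [hstep1, map_add, pderiv_C_mul, pderiv_mul, pderiv_mul, dr2, pdX, if_pos rfl,
      map_ofNat (C : ℂ →+* P3) 2]
    ring
  conv_lhs => rw [lapL_apply]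
  simp only [hstep2]
  rw [lapL_apply]
  simp only [Fin.sum_univ_three]
  ring

lemma lap_r2_mul_homog {q : P3} {m : ℕ} (hq : q.IsHomogeneous m) :
    lapL (r2 * q) = ((4 * m + 6 : ℕ) : P3) * q + r2 * lapL q := by
  rw [lap_r2_mul, euler hq, map_natCast (C : ℂ →+* P3) m]
  push_cast
  ring

lemma lapL_isHomogeneous {p : P3} {n : ℕ} (hp : p.IsHomogeneous n) :
    (lapL p).IsHomogeneous (n - 2) := by
  rw [lapL_apply]
  apply IsHomogeneous.sum
  intro i _
  have := pderiv_isHomogeneous (pderiv_isHomogeneous hp i) i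
  rwa [Nat.sub_sub] at this

lemma cancel {q : P3} {c : ℝ} (hc : 0 < c) (h : -(C (c : ℂ)) * q = 0) : q = 0 := by
  have hC : (C ((c : ℝ) : ℂ) : P3) ≠ 0 := by
    simp only [ne_eq, MvPolynomial.C_eq_zero]
    exact_mod_cast hc.ne'
  rcases mul_eq_zero.mp h with h' | h'
  · exact absurd (neg_eq_zero.mp h') hC
  · exact h'

lemma eq_zero_of_lap_eq_zero {q : P3} {c : ℝ} (hc : 0 < c)
    (heq : r2 * lapL q = -(C (c : ℂ)) * q) (hlap : lapL q = 0) : q = 0 := by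
  apply cancel hc
  rw [← heq, hlap, mul_zero]

lemma aux_inj : ∀ (m : ℕ) (q : P3), q.IsHomogeneous m → ∀ c : ℝ, 0 < c →
    r2 * lapL q = -(C (c : ℂ)) * q → q = 0 := by
  intro m
  induction m using Nat.strong_induction_on with
  | _ m IH =>
  intro q hq c hc heq
  by_cases hm : m < 2
  · refine eq_zero_of_lap_eq_zero hc heq ?_
    rw [lapL_apply]
    apply Finset.sum_eq_zero
    intro i _
    have h0 : (pderiv i q).IsHomogeneous 0 := by
      interval_cases m
      · rw [pderiv_eq_zero_of_isHomogeneous_zero hq i]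
        exact isHomogeneous_zero _ _ _
      · simpa using pderiv_isHomogeneous hq i
    exact pderiv_eq_zero_of_isHomogeneous_zero h0 i
  · push_neg at hm
    have hlq : (lapL q).IsHomogeneous (m - 2) := lapL_isHomogeneous hq
    have h2 := congrArg lapL heq
    rw [lap_r2_mul_homog hlq] at h2
    have hr : lapL (-(C (c : ℂ)) * q) = -(C (c : ℂ)) * lapL q := by
      rw [neg_mul, map_neg, C_mul', _root_.map_smul, ← C_mul', neg_mul]
    rw [hr] at h2
    set k : ℕ := 4 * (m - 2) + 6 with hk
    have hc' : (0 : ℝ) < c + k := by positivity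
    have key : r2 * lapL (lapL q) = -(C (((c + k : ℝ)) : ℂ)) * lapL q := by
      have hC : (C (((c + k : ℝ)) : ℂ) : P3) = C (c : ℂ) + ((k : ℕ) : P3) := by
        push_cast
        rw [map_add]
        norm_cast
      rw [hC]
      linear_combination h2
    have hlap0 : lapL q = 0 := IH (m - 2) (by omega) (lapL q) hlq (c + k) hc' key
    exact eq_zero_of_lap_eq_zero hc heq hlap0

instance homog_fd (m : ℕ) :
    FiniteDimensional ℂ (homogeneousSubmodule (Fin 3) ℂ m) := by
  apply Submodule.finiteDimensional_of_le (S₂ := restrictTotalDegree (Fin 3) ℂ m)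
  intro p hp
  rw [mem_restrictTotalDegree]
  exact (mem_homogeneousSubmodule m p).mp hp |>.totalDegree_le

/-- The map `q ↦ Δ(r² q)` on homogeneous polynomials of degree `m`. -/
def Lmap (m : ℕ) :
    homogeneousSubmodule (Fin 3) ℂ m →ₗ[ℂ] homogeneousSubmodule (Fin 3) ℂ m where
  toFun q := ⟨lapL (r2 * (q : P3)), by
    rw [mem_homogeneousSubmodule]
    have := lapL_isHomogeneous (isHomogeneous_r2.mul q.2)
    rwa [show 2 + m - 2 = m by omega] at this⟩
  map_add' a b := by
    apply Subtype.ext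
    simp [mul_add, map_add]
  map_smul' c a := by
    apply Subtype.ext
    simp [mul_smul_comm, _root_.map_smul]

lemma Lmap_surjective (m : ℕ) : Function.Surjective (Lmap m) := by
  rw [← LinearMap.injective_iff_surjective]
  rw [← LinearMap.ker_eq_bot, LinearMap.ker_eq_bot']
  intro q hq
  have h0 : lapL (r2 * (q : P3)) = 0 := congrArg Subtype.val hq
  rw [lap_r2_mul_homog q.2] at h0
  have heq : r2 * lapL (q : P3) = -(C (((4 * m + 6 : ℕ) : ℝ) : ℂ)) * (q : P3) := by
    have hC : (C (((4 * m + 6 : ℕ) : ℝ) : ℂ) : P3) = ((4 * m + 6 : ℕ) : P3) := by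
      rw [show ((((4 * m + 6 : ℕ) : ℝ)) : ℂ) = (((4 * m + 6 : ℕ)) : ℂ) by push_cast; ring,
        map_natCast]
    rw [hC]
    linear_combination h0
  have := aux_inj m q q.2 ((4 * m + 6 : ℕ) : ℝ) (by positivity) heq
  exact Subtype.ext this

lemma homog_decomp {m : ℕ} (hm : 2 ≤ m) {p : P3} (hp : p.IsHomogeneous m) :
    ∃ h q : P3, h.IsHomogeneous m ∧ IsHarmonic h ∧ q.IsHomogeneous (m - 2) ∧
      p = h + r2 * q := by
  have hlp : (lapL p).IsHomogeneous (m - 2) := lapL_isHomogeneous hp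
  obtain ⟨x, hx⟩ := Lmap_surjective (m - 2) ⟨lapL p, hlp⟩
  have hx' : lapL (r2 * (x : P3)) = lapL p := congrArg Subtype.val hx
  refine ⟨p - r2 * (x : P3), (x : P3), ?_, ?_, x.2, by ring⟩
  · have hr2x : (r2 * (x : P3)).IsHomogeneous m := by
      have := isHomogeneous_r2.mul x.2
      rwa [show 2 + (m - 2) = m by omega] at this
    exact hp.sub hr2x
  · rw [isHarmonic_iff, map_sub, hx', sub_self]

lemma harmonic_of_le_one {p : P3} {n : ℕ} (hn : n ≤ 1) (hp : p.IsHomogeneous n) :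
    IsHarmonic p := by
  rw [isHarmonic_iff, lapL_apply]
  apply Finset.sum_eq_zero
  intro i _
  have h0 : (pderiv i p).IsHomogeneous 0 := by
    interval_cases n
    · rw [pderiv_eq_zero_of_isHomogeneous_zero hp i]
      exact isHomogeneous_zero _ _ _
    · simpa using pderiv_isHomogeneous hp i
  exact pderiv_eq_zero_of_isHomogeneous_zero h0 i

lemma key (M : ℕ) :
    ∀ n, n ≤ M → ∀ p : P3, p.IsHomogeneous n →
      ∃ h q : P3,
        h ∈ Submodule.span ℂ
          {r : MvPolynomial (Fin 3) ℂ | ∃ j ≤ M, r.IsHomogeneous j ∧ IsHarmonic r} ∧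
        q.totalDegree ≤ M - 2 ∧ p = h + q * sphPoly := by
  intro n
  induction n using Nat.strong_induction_on with
  | _ n IH =>
  intro hn p hp
  by_cases h2 : n < 2
  · exact ⟨p, 0, Submodule.subset_span ⟨n, hn, hp, harmonic_of_le_one (by omega) hp⟩,
      by simp, by ring⟩
  · push_neg at h2
    obtain ⟨h₀, q₀, hh₀m, hh₀, hq₀, hdecomp⟩ := homog_decomp h2 hp
    obtain ⟨h₁, q₁, hh₁, hq₁, hq₀eq⟩ := IH (n - 2) (by omega) (by omega) q₀ hq₀
    refine ⟨h₀ + h₁, q₀ + q₁, ?_, ?_, ?_⟩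
    · exact Submodule.add_mem _ (Submodule.subset_span ⟨n, hn, hh₀m, hh₀⟩) hh₁
    · exact le_trans (totalDegree_add _ _)
        (max_le (le_trans hq₀.totalDegree_le (by omega)) hq₁)
    · rw [hdecomp, hq₀eq, sphPoly_eq]
      ring

end PolyDecompAux

/-- Eq. (2.30) of the paper: every polynomial `p` of degree `≤ M` can
be written `p = h + q (x²+y²+z²−1)` with `h` a finite linear combination of homogeneous
harmonic polynomials of degrees `≤ M` and `q` of degree `≤ M−2`. -/
theorem poly_decomp_harmonic_plus_multiple (M : ℕ) (p : MvPolynomial (Fin 3) ℂ)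
    (hp : p.totalDegree ≤ M) :
    ∃ h q : MvPolynomial (Fin 3) ℂ,
      h ∈ Submodule.span ℂ
        {r : MvPolynomial (Fin 3) ℂ | ∃ j ≤ M, r.IsHomogeneous j ∧ IsHarmonic r} ∧
      q.totalDegree ≤ M - 2 ∧ p = h + q * sphPoly := by
  classical
  open MvPolynomial PolyDecompAux in
  have H : ∀ i : ℕ, ∃ hh qq : MvPolynomial (Fin 3) ℂ,
      hh ∈ Submodule.span ℂ
        {r : MvPolynomial (Fin 3) ℂ | ∃ j ≤ M, r.IsHomogeneous j ∧ IsHarmonic r} ∧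
      qq.totalDegree ≤ M - 2 ∧
      MvPolynomial.homogeneousComponent i p = hh + qq * sphPoly := by
    intro i
    by_cases hi : i ≤ M
    · exact PolyDecompAux.key M i hi _ (MvPolynomial.homogeneousComponent_isHomogeneous i p)
    · refine ⟨0, 0, Submodule.zero_mem _, by simp, ?_⟩
      rw [MvPolynomial.homogeneousComponent_eq_zero _ p (by omega)]
      simp
  choose h q hh hq hpq using H
  refine ⟨∑ i ∈ Finset.range (M + 1), h i, ∑ i ∈ Finset.range (M + 1), q i, ?_, ?_, ?_⟩
  · exact Submodule.sum_mem _ fun i _ => hh i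
  · exact le_trans (MvPolynomial.totalDegree_finset_sum _ _)
      (Finset.sup_le fun i _ => hq i)
  · have hsum : ∑ i ∈ Finset.range (M + 1), MvPolynomial.homogeneousComponent i p = p := by
      refine Eq.trans ?_ (MvPolynomial.sum_homogeneousComponent p)
      refine (Finset.sum_subset (Finset.range_subset_range.mpr (by omega)) ?_).symm
      intro i _ hi
      simp only [Finset.mem_range] at hi
      exact MvPolynomial.homogeneousComponent_eq_zero _ p (by omega)
    calc p = ∑ i ∈ Finset.range (M + 1), MvPolynomial.homogeneousComponent i p := hsum.symm
    _ = ∑ i ∈ Finset.range (M + 1), (h i + q i * sphPoly) :=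
        Finset.sum_congr rfl fun i _ => hpq i
    _ = (∑ i ∈ Finset.range (M + 1), h i) + (∑ i ∈ Finset.range (M + 1), q i) * sphPoly := by
        rw [Finset.sum_add_distrib, Finset.sum_mul]


end
end

section
/- If a complex polynomial p of degree ≤ M in the three real variables x, y, z vanishes identically on the unit sphere S² ⊂ ℝ³, then p = q·(x²+y²+z²−1) for some polynomial q of degree ≤ M−2; i.e. the kernel of the restriction map from polynomials of degree ≤ M to functions on S² consists exactly of the multiples of x²+y²+z²−1 by polynomials of degree ≤ M−2. -/
open scoped ComplexConjugate
open MeasureTheory Filter Topology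

noncomputable section

section Helpers
open MvPolynomial

lemma hcomp_top_ne_zero {σ : Type*} {p : MvPolynomial σ ℂ} (hp : p ≠ 0) :
    homogeneousComponent p.totalDegree p ≠ 0 := by
  obtain ⟨d, hd, hdeg⟩ := Finset.exists_mem_eq_sup p.support
    (support_nonempty.mpr hp) (fun s : σ →₀ ℕ => s.sum fun _ e => e)
  intro h
  have h2 := coeff_homogeneousComponent (φ := p) (n := p.totalDegree) d
  rw [h] at h2
  have hdd : d.degree = p.totalDegree := by
    rw [Finsupp.degree, totalDegree, hdeg, Finsupp.sum]
    rfl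
  rw [if_pos hdd] at h2
  exact (mem_support_iff.mp hd) h2.symm

lemma totDeg_add_le {σ : Type*} {p q : MvPolynomial σ ℂ} (hp : p ≠ 0) (hq : q ≠ 0) :
    p.totalDegree + q.totalDegree ≤ (p * q).totalDegree := by
  set a := p.totalDegree with ha
  set b := q.totalDegree with hb
  have key : homogeneousComponent (a + b) (p * q)
      = homogeneousComponent a p * homogeneousComponent b q := by
    have hpq : p * q = ∑ i ∈ Finset.range (a+1), ∑ j ∈ Finset.range (b+1),
        homogeneousComponent i p * homogeneousComponent j q := by
      rw [← Finset.sum_mul_sum]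
      rw [sum_homogeneousComponent, sum_homogeneousComponent]
    rw [hpq, map_sum]
    have hterm : ∀ i ∈ Finset.range (a+1), ∀ j ∈ Finset.range (b+1),
        homogeneousComponent (a+b) (homogeneousComponent i p * homogeneousComponent j q)
        = if a + b = i + j then homogeneousComponent i p * homogeneousComponent j q else 0 := by
      intro i _ j _
      exact homogeneousComponent_of_mem ((mem_homogeneousSubmodule _ _).mpr
        ((homogeneousComponent_isHomogeneous i p).mul (homogeneousComponent_isHomogeneous j q)))
    rw [Finset.sum_congr rfl (fun i hi => by rw [map_sum, Finset.sum_congr rfl (hterm i hi)])]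
    rw [Finset.sum_eq_single_of_mem a (Finset.self_mem_range_succ a)]
    · rw [Finset.sum_eq_single_of_mem b (Finset.self_mem_range_succ b), if_pos rfl]
      intro j hj hjb
      rw [if_neg]
      simp only [Finset.mem_range] at hj
      omega
    · intro i hi hia
      apply Finset.sum_eq_zero
      intro j hj
      rw [if_neg]
      simp only [Finset.mem_range] at hi hj
      omega
  by_contra hlt
  push_neg at hlt
  have h0 := homogeneousComponent_eq_zero _ _ hlt
  rw [key] at h0
  exact mul_ne_zero (hcomp_top_ne_zero hp) (hcomp_top_ne_zero hq) h0

lemma vanish_aux : ∀ (n : ℕ) (S : Set ℂ), S.Infinite →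
    ∀ q : MvPolynomial (Fin n) ℂ,
      (∀ x : Fin n → ℂ, (∀ i, x i ∈ S) → MvPolynomial.eval x q = 0) → q = 0 := by
  intro n
  induction n with
  | zero =>
    intro S hS q hq
    have h0 := hq (fun i => i.elim0) (fun i => i.elim0)
    rw [eq_C_of_isEmpty q] at h0 ⊢
    rw [eval_C] at h0
    rw [h0, map_zero]
  | succ n ih =>
    intro S hS q hq
    have hcoeff : ∀ k, (finSuccEquiv ℂ n q).coeff k = 0 := by
      intro k
      apply ih S hS
      intro x hx
      have hP : (finSuccEquiv ℂ n q).map (eval x) = 0 := by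
        apply Polynomial.eq_zero_of_infinite_isRoot
        apply hS.mono
        intro y hy
        show Polynomial.IsRoot _ y
        rw [Polynomial.IsRoot, ← eval_eq_eval_mv_eval']
        exact hq (Fin.cons y x) (fun i => by
          refine Fin.cases ?_ ?_ i
          · simpa using hy
          · intro j; simpa using hx j)
      have := congrArg (fun P => Polynomial.coeff P k) hP
      simpa [Polynomial.coeff_map] using this
    have hq0 : finSuccEquiv ℂ n q = 0 := Polynomial.ext (fun k => by rw [hcoeff k]; rfl)
    have := congrArg (finSuccEquiv ℂ n).symm hq0
    simpa using this

lemma mk_mem_sphere (v : EuclideanSpace ℝ (Fin 3))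
    (h : v 0 ^ 2 + v 1 ^ 2 + v 2 ^ 2 = 1) :
    v ∈ Metric.sphere (0 : EuclideanSpace ℝ (Fin 3)) 1 := by
  have hn : ‖v‖ = 1 := by
    rw [EuclideanSpace.norm_eq]
    have h2 : ∀ i : Fin 3, ‖v i‖ ^ 2 = v i ^ 2 := fun i => sq_abs _
    simp only [h2, Fin.sum_univ_three, h]
    exact Real.sqrt_one
  simpa [mem_sphere_iff_norm] using hn

lemma sum_sq_of_S2 (Ω : S2) :
    ((Ω : EuclideanSpace ℝ (Fin 3)) 0) ^ 2 + ((Ω : EuclideanSpace ℝ (Fin 3)) 1) ^ 2 +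
      ((Ω : EuclideanSpace ℝ (Fin 3)) 2) ^ 2 = 1 := by
  have hn : ‖(Ω : EuclideanSpace ℝ (Fin 3))‖ = 1 := by
    have := Ω.2
    simpa [mem_sphere_iff_norm] using this
  rw [EuclideanSpace.norm_eq] at hn
  have h2 : ∀ i : Fin 3, ‖(Ω : EuclideanSpace ℝ (Fin 3)) i‖ ^ 2
      = ((Ω : EuclideanSpace ℝ (Fin 3)) i) ^ 2 := fun i => sq_abs _
  have h3 := Real.sqrt_eq_one.mp hn
  simp only [h2, Fin.sum_univ_three] at h3
  exact h3

lemma eval_sphPoly_S2 (Ω : S2) :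
    MvPolynomial.eval (fun i => (((Ω : EuclideanSpace ℝ (Fin 3)) i : ℝ) : ℂ)) sphPoly = 0 := by
  have h := sum_sq_of_S2 Ω
  simp only [sphPoly, map_add, map_sub, map_pow, map_one, eval_X]
  rw [sub_eq_zero]
  have h' := congrArg (fun t : ℝ => (t : ℂ)) h
  simp only [Complex.ofReal_add, Complex.ofReal_pow, Complex.ofReal_one] at h'
  exact h'

end Helpers

/-- a polynomial `p` of degree `≤ M` vanishes identically on `S²` if
and only if `p = q (x²+y²+z²−1)` for some polynomial `q` of degree `≤ M−2`. -/
theorem vanishes_on_sphere_iff_multiple (M : ℕ) (p : MvPolynomial (Fin 3) ℂ)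
    (hp : p.totalDegree ≤ M) :
    (∀ Ω : S2, restrictS2 p Ω = 0) ↔
      ∃ q : MvPolynomial (Fin 3) ℂ, q.totalDegree ≤ M - 2 ∧ p = q * sphPoly := by
  classical
  constructor
  · intro h
    set e := MvPolynomial.finSuccEquiv ℂ 2 with he
    set c : MvPolynomial (Fin 2) ℂ :=
      MvPolynomial.X 0 ^ 2 + MvPolynomial.X 1 ^ 2 - 1 with hc
    set Sp : Polynomial (MvPolynomial (Fin 2) ℂ) :=
      Polynomial.X ^ 2 + Polynomial.C c with hSp
    have hmonic : Sp.Monic := Polynomial.monic_X_pow_add_C _ (by norm_num)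
    have hS : e sphPoly = Sp := by
      have h1 : (1 : Fin 3) = (0 : Fin 2).succ := rfl
      have h2 : (2 : Fin 3) = (1 : Fin 2).succ := rfl
      simp only [sphPoly, map_add, map_sub, map_pow, map_one, h1, h2, he,
        MvPolynomial.finSuccEquiv_X_zero, MvPolynomial.finSuccEquiv_X_succ, hSp, hc,
        map_sub, map_one]
      ring
    set q := e.symm (e p /ₘ Sp) with hq
    set r := e.symm (e p %ₘ Sp) with hr
    have her : e r = e p %ₘ Sp := e.apply_symm_apply _
    have heq : e q = e p /ₘ Sp := e.apply_symm_apply _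
    have hpr : p = r + q * sphPoly := by
      apply e.injective
      rw [map_add, map_mul, hS, her, heq, mul_comm]
      exact (Polynomial.modByMonic_add_div (e p) Sp).symm
    have hr0 : ∀ Ω : S2,
        MvPolynomial.eval (fun i => (((Ω : EuclideanSpace ℝ (Fin 3)) i : ℝ) : ℂ)) r = 0 := by
      intro Ω
      have hP : MvPolynomial.eval
          (fun i => (((Ω : EuclideanSpace ℝ (Fin 3)) i : ℝ) : ℂ)) p = 0 := h Ω
      have h2 := congrArg
        (MvPolynomial.eval fun i => (((Ω : EuclideanSpace ℝ (Fin 3)) i : ℝ) : ℂ)) hpr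
      rw [map_add, map_mul, eval_sphPoly_S2, mul_zero, add_zero] at h2
      rw [← h2]; exact hP
    set a := (e p %ₘ Sp).coeff 0 with hA
    set b := (e p %ₘ Sp).coeff 1 with hB
    have hdS : Sp.degree = 2 := Polynomial.degree_X_pow_add_C (by norm_num) c
    have hdeglt : (e p %ₘ Sp).degree < 2 := by
      have := Polynomial.degree_modByMonic_lt (e p) hmonic
      rwa [hdS] at this
    have hRm : e p %ₘ Sp = Polynomial.C a + Polynomial.C b * Polynomial.X := by
      ext k
      match k with
      | 0 => simp [hA]
      | 1 => simp [hB]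
      | (k+2) =>
        rw [Polynomial.coeff_eq_zero_of_degree_lt
          (lt_of_lt_of_le hdeglt (by exact_mod_cast Nat.le_add_left 2 k))]
        simp [Polynomial.coeff_C, Polynomial.coeff_X]
    have heval : ∀ (x0 : ℂ) (x : Fin 2 → ℂ),
        MvPolynomial.eval (Fin.cons x0 x) r
          = MvPolynomial.eval x a + MvPolynomial.eval x b * x0 := by
      intro x0 x
      rw [MvPolynomial.eval_eq_eval_mv_eval']
      rw [show MvPolynomial.finSuccEquiv ℂ 2 r = e r from rfl, her, hRm]
      simp
    set I : Set ℝ := Set.Ioo (-(1:ℝ)/2) (1/2) with hI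
    have hIinf : I.Infinite := Set.Ioo_infinite (by norm_num)
    set Sc : Set ℂ := Complex.ofReal '' I with hScdef
    have hSc : Sc.Infinite := hIinf.image Complex.ofReal_injective.injOn
    have hab : ∀ x : Fin 2 → ℂ, (∀ i, x i ∈ Sc) →
        MvPolynomial.eval x a = 0 ∧ MvPolynomial.eval x b = 0 := by
      intro x hx
      obtain ⟨y, hy, hy0⟩ := hx 0
      obtain ⟨z, hz, hz0⟩ := hx 1
      simp only [hI, Set.mem_Ioo] at hy hz
      have hpos : 0 < 1 - y^2 - z^2 := by nlinarith [hy.1, hy.2, hz.1, hz.2]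
      set t := Real.sqrt (1 - y^2 - z^2) with ht
      have ht2 : t^2 = 1 - y^2 - z^2 := Real.sq_sqrt hpos.le
      have htpos : 0 < t := Real.sqrt_pos.mpr hpos
      have key : ∀ s : ℝ, s^2 = 1 - y^2 - z^2 →
          MvPolynomial.eval x a + MvPolynomial.eval x b * (s:ℂ) = 0 := by
        intro s hs
        have hmem : (WithLp.toLp 2 ![s, y, z] : EuclideanSpace ℝ (Fin 3)) ∈
            Metric.sphere (0 : EuclideanSpace ℝ (Fin 3)) 1 := by
          apply mk_mem_sphere
          show s^2 + y^2 + z^2 = 1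
          nlinarith [hs]
        have h0 : MvPolynomial.eval
            (fun i => (((![s, y, z] : Fin 3 → ℝ) i : ℝ) : ℂ)) r = 0 :=
          hr0 ⟨(WithLp.toLp 2 ![s, y, z] : EuclideanSpace ℝ (Fin 3)), hmem⟩
        have hfun : (fun i => (((![s, y, z] : Fin 3 → ℝ) i : ℝ) : ℂ))
            = Fin.cons (s:ℂ) x := by
          funext i
          refine Fin.cases ?_ (fun j => ?_) i
          · simp
          · rw [Fin.cons_succ]
            fin_cases j
            · simpa using hy0
            · simpa using hz0
        rw [hfun, heval] at h0
        exact h0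
      have k1 := key t ht2
      have k2 := key (-t) (by rw [neg_pow]; simpa using ht2)
      push_cast at k2
      have htne : (t : ℂ) ≠ 0 := by
        exact_mod_cast htpos.ne'
      constructor
      · linear_combination (k1 + k2) / 2
      · have hbt : MvPolynomial.eval x b * (t:ℂ) = 0 := by linear_combination (k1 - k2) / 2
        exact (mul_eq_zero.mp hbt).resolve_right htne
    have ha : a = 0 := vanish_aux 2 Sc hSc a (fun x hx => (hab x hx).1)
    have hb : b = 0 := vanish_aux 2 Sc hSc b (fun x hx => (hab x hx).2)
    have hrzero : r = 0 := by
      rw [hr, show e p %ₘ Sp = 0 by rw [hRm, ha, hb]; simp, map_zero]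
    have hpq : p = q * sphPoly := by rw [hpr, hrzero, zero_add]
    refine ⟨q, ?_, hpq⟩
    by_cases hq0 : q = 0
    · simp [hq0]
    · have hsph0 : sphPoly ≠ 0 := by
        intro h0
        have h1 : e sphPoly = 0 := by rw [h0, map_zero]
        rw [hS] at h1
        exact hmonic.ne_zero h1
      have h1 : q.totalDegree + sphPoly.totalDegree ≤ (q * sphPoly).totalDegree :=
        totDeg_add_le hq0 hsph0
      have h2 : 2 ≤ sphPoly.totalDegree := by
        have hco : MvPolynomial.coeff (Finsupp.single (0 : Fin 3) 2) sphPoly = 1 := by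
          have hne1 : Finsupp.single (1 : Fin 3) 2 ≠ Finsupp.single (0 : Fin 3) 2 := by
            intro hh
            have := DFunLike.congr_fun hh 0
            simp [Finsupp.single_apply] at this
          have hne2 : Finsupp.single (2 : Fin 3) 2 ≠ Finsupp.single (0 : Fin 3) 2 := by
            intro hh
            have := DFunLike.congr_fun hh 0
            simp [Finsupp.single_apply] at this
          have hne3 : (0 : Fin 3 →₀ ℕ) ≠ Finsupp.single (0 : Fin 3) 2 := by
            intro hh
            have := DFunLike.congr_fun hh 0
            simp [Finsupp.single_apply] at this
          simp only [sphPoly, MvPolynomial.coeff_add, MvPolynomial.coeff_sub,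
            MvPolynomial.coeff_X_pow, MvPolynomial.coeff_one, if_pos rfl,
            if_neg hne1, if_neg hne2, if_neg hne3]
          simp
        have hmem : Finsupp.single (0 : Fin 3) 2 ∈ sphPoly.support :=
          MvPolynomial.mem_support_iff.mpr (by rw [hco]; norm_num)
        have := MvPolynomial.le_totalDegree hmem
        simpa [Finsupp.sum_single_index] using this
      have h3 : (q * sphPoly).totalDegree ≤ M := by rw [← hpq]; exact hp
      omega
  · rintro ⟨q, hq, rfl⟩
    intro Ω
    show MvPolynomial.eval _ (q * sphPoly) = 0
    rw [map_mul, eval_sphPoly_S2, mul_zero]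

end
end
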